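/- The graph Λ_{(p,q)} is connected: any two vertices (c₁,…,c_p) and (d₁,…,d_p) with c₁ ≤ ⋯ ≤ c_p ≤ c₁+q and d₁ ≤ ⋯ ≤ d_p ≤ d₁+q are joined by a path of edges, each edge changing exactly one coordinate by ±1 while staying in the vertex set. -/

import Mathlib

/-- The vertex set `Λ⁰_{(p,q)} = {(c₁,…,c_p) ∈ ℤ^p : c₁ ≤ ⋯ ≤ c_p ≤ c₁ + q}`
(written index-free: monotone and any two entries differ by at most `q`). -/
def Lam0 (p q : ℕ) : Set (Fin p → ℤ) :=
  {c | (∀ i j : Fin p, i ≤ j → c i ≤ c j) ∧ ∀ i j : Fin p, c i ≤ c j + q}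

/-- The graph `Λ_{(p,q)}`: vertices `Λ⁰_{(p,q)}`, edges between tuples at ℓ¹-distance 1. -/
def LamGraph (p q : ℕ) : SimpleGraph (Lam0 p q) where
  Adj u v := ∑ i, ((u : Fin p → ℤ) i - (v : Fin p → ℤ) i).natAbs = 1
  symm := by
    refine ⟨fun u v h => ?_⟩
    have e : ∀ i, ((v : Fin p → ℤ) i - (u : Fin p → ℤ) i).natAbs
        = ((u : Fin p → ℤ) i - (v : Fin p → ℤ) i).natAbs := fun i => by rw [← Int.natAbs_neg, neg_sub]
    simpa [e] using h
  loopless := ⟨fun u h => by simp at h⟩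

section Aux
variable {p q : ℕ}

/-- constant vertex -/
def constV (p q : ℕ) (a : ℤ) : Lam0 p q :=
  ⟨fun _ => a, fun _ _ _ => le_refl a, fun _ _ => le_add_of_nonneg_right (by positivity)⟩

lemma adj_of_update {c : Lam0 p q} {j : Fin p} {c' : Lam0 p q}
    (h : ∀ i, i ≠ j → (c' : Fin p → ℤ) i = (c : Fin p → ℤ) i)
    (hj : ((c : Fin p → ℤ) j - (c' : Fin p → ℤ) j).natAbs = 1) :
    (LamGraph p q).Adj c c' := by
  show (∑ i, ((c : Fin p → ℤ) i - (c' : Fin p → ℤ) i).natAbs) = 1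
  rw [Finset.sum_eq_single j]
  · exact hj
  · intro i _ hi; rw [h i hi]; simp
  · intro h'; exact absurd (Finset.mem_univ j) h'

/-- every vertex reaches the constant vertex at its first coordinate -/
lemma reach_const (hp : 1 ≤ p) (u : Lam0 p q) :
    (LamGraph p q).Reachable u (constV p q ((u : Fin p → ℤ) ⟨0, hp⟩)) := by
  set z : Fin p := ⟨0, hp⟩ with hz
  generalize hm : (∑ i, ((u : Fin p → ℤ) i - (u : Fin p → ℤ) z).toNat) = m
  induction m using Nat.strong_induction_on generalizing u with
  | _ m ih =>
    rcases Nat.eq_zero_or_pos m with h0 | hpos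
    · -- all coordinates equal; u = constV
      subst h0
      have hall : ∀ i, (u : Fin p → ℤ) i = (u : Fin p → ℤ) z := by
        intro i
        have hle : (u : Fin p → ℤ) z ≤ (u : Fin p → ℤ) i :=
          u.2.1 z i (by exact Fin.mk_le_of_le_val (Nat.zero_le _))
        have : ((u : Fin p → ℤ) i - (u : Fin p → ℤ) z).toNat = 0 := by
          exact Finset.sum_eq_zero_iff.mp hm i (Finset.mem_univ i)
        omega
      have : u = constV p q ((u : Fin p → ℤ) z) := by
        apply Subtype.ext; funext i; exact hall i
      rw [← this]
    · -- find minimal index with strictly larger value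
      have hex : ∃ i : Fin p, (u : Fin p → ℤ) z < (u : Fin p → ℤ) i := by
        by_contra hno
        push_neg at hno
        have : (∑ i, ((u : Fin p → ℤ) i - (u : Fin p → ℤ) z).toNat) = 0 := by
          apply Finset.sum_eq_zero; intro i _
          have := hno i; omega
        omega
      set S : Finset (Fin p) := Finset.univ.filter (fun i => (u : Fin p → ℤ) z < (u : Fin p → ℤ) i) with hS
      have hSne : S.Nonempty := by
        obtain ⟨i, hi⟩ := hex
        exact ⟨i, by simp [hS, hi]⟩
      set j : Fin p := S.min' hSne with hj
      have hjS : j ∈ S := S.min'_mem hSne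
      have hjgt : (u : Fin p → ℤ) z < (u : Fin p → ℤ) j := by
        simpa [hS] using hjS
      have hmin : ∀ i : Fin p, i < j → (u : Fin p → ℤ) i = (u : Fin p → ℤ) z := by
        intro i hij
        have hiS : i ∉ S := fun hi => absurd (S.min'_le i hi) (not_le.mpr hij)
        have h1 : ¬ (u : Fin p → ℤ) z < (u : Fin p → ℤ) i := by
          intro h; exact hiS (by simp [hS, h])
        have h2 : (u : Fin p → ℤ) z ≤ (u : Fin p → ℤ) i :=
          u.2.1 z i (Fin.mk_le_of_le_val (Nat.zero_le _))
        omega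
      -- new vertex
      set f : Fin p → ℤ := Function.update (u : Fin p → ℤ) j ((u : Fin p → ℤ) j - 1) with hf
      have hfj : f j = (u : Fin p → ℤ) j - 1 := by simp [hf]
      have hfne : ∀ i, i ≠ j → f i = (u : Fin p → ℤ) i := by
        intro i hi; simp [hf, Function.update_of_ne hi]
      have hfmem : f ∈ Lam0 p q := by
        constructor
        · intro i k hik
          rcases eq_or_ne i j with rfl | hi
          · rcases eq_or_ne k j with rfl | hk
            · exact le_refl _
            · rw [hfj, hfne k hk]
              have := u.2.1 j k hik; omega
          · rw [hfne i hi]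
            rcases eq_or_ne k j with rfl | hk
            · rw [hfj]
              have hik' : i < j := lt_of_le_of_ne hik hi
              have := hmin i hik'; omega
            · rw [hfne k hk]; exact u.2.1 i k hik
        · intro i k
          have hfi : f i ≤ (u : Fin p → ℤ) i := by
            rcases eq_or_ne i j with rfl | hi
            · rw [hfj]; omega
            · rw [hfne i hi]
          rcases eq_or_ne k j with rfl | hk
          · rw [hfj]
            have := u.2.2 i z
            omega
          · rw [hfne k hk]
            have := u.2.2 i k; omega
      set u' : Lam0 p q := ⟨f, hfmem⟩ with hu'
      have hadj : (LamGraph p q).Adj u u' := by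
        apply adj_of_update (j := j)
        · intro i hi; exact hfne i hi
        · show ((u : Fin p → ℤ) j - f j).natAbs = 1
          rw [hfj]; simp
      have hzj : z ≠ j := by
        intro h; rw [← h] at hjgt; omega
      have hu'z : (u' : Fin p → ℤ) z = (u : Fin p → ℤ) z := hfne z hzj
      have hlt : (∑ i, ((u' : Fin p → ℤ) i - (u' : Fin p → ℤ) z).toNat) < m := by
        rw [← hm, hu'z]
        apply Finset.sum_lt_sum
        · intro i _
          rcases eq_or_ne i j with rfl | hi
          · show ((f j) - _).toNat ≤ _
            rw [hfj]; omega
          · show ((f i) - _).toNat ≤ _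
            rw [hfne i hi]
        · refine ⟨j, Finset.mem_univ j, ?_⟩
          show ((f j) - _).toNat < _
          rw [hfj]; omega
      have := ih _ hlt u' rfl
      rw [hu'z] at this
      exact hadj.reachable.trans this

/-- step between consecutive constants -/
lemma const_step (hp : 1 ≤ p) (hq : 1 ≤ q) (a : ℤ) :
    (LamGraph p q).Reachable (constV p q a) (constV p q (a + 1)) := by
  have hmem : ∀ k : ℕ, (fun i : Fin p => if k ≤ i.val then a + 1 else a) ∈ Lam0 p q := by
    intro k
    constructor
    · intro i j hij
      show (if k ≤ i.val then a + 1 else a) ≤ (if k ≤ j.val then a + 1 else a)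
      have hij' : i.val ≤ j.val := hij
      split <;> split <;> omega
    · intro i j
      show (if k ≤ i.val then a + 1 else a) ≤ (if k ≤ j.val then a + 1 else a) + q
      have hq' : (1 : ℤ) ≤ (q : ℤ) := by exact_mod_cast hq
      split <;> split <;> omega
  set w : ℕ → Lam0 p q := fun k => ⟨_, hmem k⟩ with hw
  have key : ∀ k : ℕ, (LamGraph p q).Reachable (w 0) (w k) := by
    intro k
    induction k with
    | zero => exact SimpleGraph.Reachable.refl _
    | succ k ihk =>
      rcases lt_or_ge k p with hk | hk
      · refine ihk.trans (SimpleGraph.Adj.reachable ?_)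
        apply adj_of_update (j := ⟨k, hk⟩)
        · intro i hi
          show (if k + 1 ≤ i.val then a + 1 else a) = (if k ≤ i.val then a + 1 else a)
          have : i.val ≠ k := fun h => hi (Fin.ext h)
          rcases lt_or_ge i.val k with h | h
          · rw [if_neg (by omega), if_neg (by omega)]
          · rw [if_pos (by omega), if_pos (by omega)]
        · show ((if k ≤ k then a + 1 else a) - (if k + 1 ≤ k then a + 1 else a)).natAbs = 1
          rw [if_pos (le_refl k), if_neg (by omega)]
          simp
      · have : w (k + 1) = w k := by
          apply Subtype.ext; funext i
          show (if k + 1 ≤ i.val then a + 1 else a) = (if k ≤ i.val then a + 1 else a)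
          have : i.val < p := i.isLt
          rw [if_neg (by omega), if_neg (by omega)]
        rw [this]; exact ihk
  have h0 : w 0 = constV p q (a + 1) := by
    apply Subtype.ext; funext i
    show (if 0 ≤ i.val then a + 1 else a) = a + 1
    rw [if_pos (Nat.zero_le _)]
  have hpp : w p = constV p q a := by
    apply Subtype.ext; funext i
    show (if p ≤ i.val then a + 1 else a) = a
    rw [if_neg (not_le.mpr i.isLt)]
  have := key p
  rw [h0, hpp] at this
  exact this.symm

lemma const_reach (hp : 1 ≤ p) (hq : 1 ≤ q) (a b : ℤ) :
    (LamGraph p q).Reachable (constV p q a) (constV p q b) := by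
  suffices h : ∀ a b : ℤ, a ≤ b → (LamGraph p q).Reachable (constV p q a) (constV p q b) by
    rcases le_total a b with hab | hab
    · exact h a b hab
    · exact (h b a hab).symm
  intro a b hab
  obtain ⟨n, rfl⟩ : ∃ n : ℕ, b = a + n := ⟨(b - a).toNat, by omega⟩
  clear hab
  induction n with
  | zero => simpa using SimpleGraph.Reachable.refl (constV p q a)
  | succ n ihn =>
    refine ihn.trans ?_
    have := const_step (p := p) (q := q) hp hq (a + n)
    convert this using 2
    push_cast; ring

end Aux

theorem lamGraph_connected (p q : ℕ) (hp : 1 ≤ p) (hq : 1 ≤ q) (u v : Lam0 p q) :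
    (LamGraph p q).Reachable u v := by
  refine (reach_const hp u).trans (SimpleGraph.Reachable.trans ?_ (reach_const hp v).symm)
  exact const_reach hp hq _ _
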